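/- Let G be an undirected connected graph with nonnegative edge weights, s a start vertex with col(s) = ∅, and let w' denote the shortest-path metric of G. Define a table T over pairs (v, S) with v ∈ V \ {s} and S ⊆ C by T[v, S] = ∞ if S ∩ col(v) = ∅, and otherwise T[v, S] = min over u ∈ V (including u = s) of T[u, S \ col(v)] + w'(u, v), with base cases T[s, ∅] = 0 and T[s, S] = ∞ for S ≠ ∅. Then for every v and S with S ∩ col(v) ≠ ∅, T[v, S] equals the minimum weight of a walk in G from s to v that collects all colors in S. -/

import Mathlib

open scoped ENNReal

/-- Weight of a walk (ℝ≥0∞-valued): sum of weights of consecutive pairs. Non-edges may be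
encoded by weight `⊤`. -/
noncomputable def walkWeightE {V : Type*} (w : V → V → ℝ≥0∞) : List V → ℝ≥0∞
  | [] => 0
  | [_] => 0
  | a :: b :: rest => w a b + walkWeightE w (b :: rest)

/-- The set of colors collected by a walk. -/
def collected {V C : Type*} [DecidableEq C] (col : V → Finset C) (p : List V) : Finset C :=
  p.foldr (fun v acc => col v ∪ acc) ∅

section Stmt10Aux

variable {V C : Type*} [DecidableEq C]

lemma collected_nil (col : V → Finset C) : collected col [] = ∅ := rfl

lemma collected_cons (col : V → Finset C) (a : V) (p : List V) :
    collected col (a :: p) = col a ∪ collected col p := rfl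

lemma collected_append (col : V → Finset C) (p q : List V) :
    collected col (p ++ q) = collected col p ∪ collected col q := by
  induction p with
  | nil => simp [collected_nil]
  | cons a p ih => simp [collected_cons, ih, Finset.union_assoc]

lemma mem_collected_iff (col : V → Finset C) (p : List V) (c : C) :
    c ∈ collected col p ↔ ∃ a ∈ p, c ∈ col a := by
  induction p with
  | nil => simp [collected_nil]
  | cons a p ih => simp [collected_cons, ih]

lemma col_subset_collected (col : V → Finset C) {a : V} {p : List V} (h : a ∈ p) :
    col a ⊆ collected col p := fun c hc => (mem_collected_iff col p c).2 ⟨a, h, hc⟩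

lemma mem_of_getLast?' {p : List V} {v : V} (h : p.getLast? = some v) : v ∈ p := by
  cases p with
  | nil => simp at h
  | cons a q =>
    rw [List.getLast?_eq_getLast (by simp : (a :: q) ≠ [])] at h
    injection h with h
    rw [← h]
    exact List.getLast_mem _

lemma walkWeightE_nil (w : V → V → ℝ≥0∞) : walkWeightE w [] = 0 := rfl

lemma walkWeightE_single (w : V → V → ℝ≥0∞) (a : V) : walkWeightE w [a] = 0 := rfl

lemma walkWeightE_cons_cons (w : V → V → ℝ≥0∞) (a b : V) (l : List V) :
    walkWeightE w (a :: b :: l) = w a b + walkWeightE w (b :: l) := rfl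

lemma walkWeightE_glue (w : V → V → ℝ≥0∞) :
    ∀ (p : List V) (u : V) (q : List V), p.getLast? = some u →
      walkWeightE w (p ++ q) = walkWeightE w p + walkWeightE w (u :: q)
  | [], u, q, h => by simp at h
  | [a], u, q, h => by
    simp only [List.getLast?_singleton, Option.some.injEq] at h
    subst h
    rw [List.singleton_append, walkWeightE_single, zero_add]
  | a :: b :: rest, u, q, h => by
    have h' : (b :: rest).getLast? = some u := by
      rw [List.getLast?_cons_cons] at h; exact h
    have ihr := walkWeightE_glue w (b :: rest) u q h'
    simp only [List.cons_append] at ihr ⊢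
    rw [walkWeightE_cons_cons, walkWeightE_cons_cons, ihr, add_assoc]

lemma exists_split (col : V → Finset C) (X : Finset C) (hX : X.Nonempty) :
    ∀ p : List V, X ⊆ collected col p →
      ∃ p1 u q, p = p1 ++ u :: q ∧ X ⊆ collected col (p1 ++ [u]) ∧ (X ∩ col u).Nonempty := by
  intro p
  induction p using List.reverseRecOn with
  | nil =>
    intro h
    obtain ⟨c, hc⟩ := hX
    simpa [collected_nil] using h hc
  | append_singleton p a ih =>
    intro h
    by_cases hca : (X ∩ col a).Nonempty
    · exact ⟨p, a, [], rfl, h, hca⟩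
    · have hsub : X ⊆ collected col p := by
        intro c hc
        have hcc := h hc
        rw [collected_append] at hcc
        rcases Finset.mem_union.1 hcc with h1 | h2
        · exact h1
        · exact absurd ⟨c, Finset.mem_inter.2 ⟨hc, by
            simpa [collected_cons, collected_nil] using h2⟩⟩ hca
      obtain ⟨p1, u, q, hp, hsub1, hu⟩ := ih hsub
      exact ⟨p1, u, q ++ [a], by rw [hp]; simp, hsub1, hu⟩

end Stmt10Aux

/-- correctness of the Graph Inspection dynamic program. If `T` satisfies the
DP recurrence over the shortest-path metric `w'` of a connected graph (encoded by
`w : V → V → ℝ≥0∞`, with `⊤` on non-edges) and `col s = ∅`, then for every `v ≠ s` and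
`S` with `S ∩ col v ≠ ∅`, `T v S` is the minimum weight of a walk in `G` from `s` to `v`
collecting all colors in `S`. -/
theorem stmt10 {V C : Type*} [DecidableEq C]
    (w : V → V → ℝ≥0∞) (hwsymm : ∀ u v, w u v = w v u)
    (col : V → Finset C) (s : V) (hcols : col s = ∅)
    (w' : V → V → ℝ≥0∞)
    (hw' : ∀ u v, w' u v = sInf {x | ∃ p : List V,
        p.head? = some u ∧ p.getLast? = some v ∧ walkWeightE w p = x})
    (hconnW : ∀ u v, w' u v ≠ ⊤)
    (T : V → Finset C → ℝ≥0∞)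
    (hTs0 : T s ∅ = 0)
    (hTs : ∀ S : Finset C, S ≠ ∅ → T s S = ⊤)
    (hT1 : ∀ (v : V) (S : Finset C), v ≠ s → S ∩ col v = ∅ → T v S = ⊤)
    (hT2 : ∀ (v : V) (S : Finset C), v ≠ s → S ∩ col v ≠ ∅ →
        T v S = ⨅ u : V, T u (S \ col v) + w' u v) :
    ∀ (v : V) (S : Finset C), v ≠ s → S ∩ col v ≠ ∅ →
      T v S = sInf {x | ∃ p : List V, p.head? = some s ∧ p.getLast? = some v ∧
        S ⊆ collected col p ∧ walkWeightE w p = x} := by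
  suffices H : ∀ n : ℕ, ∀ S : Finset C, S.card ≤ n → ∀ v : V, v ≠ s → S ∩ col v ≠ ∅ →
      T v S = sInf {x | ∃ p : List V, p.head? = some s ∧ p.getLast? = some v ∧
        S ⊆ collected col p ∧ walkWeightE w p = x} by
    exact fun v S hv hS => H S.card S le_rfl v hv hS
  intro n
  induction n with
  | zero =>
    intro S hS v _ hne
    exact absurd (by rw [Finset.card_eq_zero.1 (Nat.le_zero.1 hS), Finset.empty_inter]) hne
  | succ n ih =>
    intro S hcard v hv hSv
    set X : Finset C := S \ col v with hXdef
    have hXS : X ⊆ S := Finset.sdiff_subset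
    have hXcard : X.card ≤ n := by
      have hlt : X.card < S.card := by
        apply Finset.card_lt_card
        rw [Finset.ssubset_iff_of_subset hXS]
        obtain ⟨c, hc⟩ := Finset.nonempty_iff_ne_empty.2 hSv
        rw [Finset.mem_inter] at hc
        exact ⟨c, hc.1, by simp [hXdef, hc.1, hc.2]⟩
      omega
    rw [hT2 v S hv hSv, ← hXdef]
    apply le_antisymm
    · -- DP value ≤ every walk's weight
      apply le_sInf
      rintro x ⟨p, hph, hpl, hpc, rfl⟩
      by_cases hXe : X = ∅
      · refine le_trans (iInf_le _ s) ?_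
        rw [hXe, hTs0, zero_add, hw']
        exact sInf_le ⟨p, hph, hpl, rfl⟩
      · have hXne : X.Nonempty := Finset.nonempty_iff_ne_empty.2 hXe
        have hXsub : X ⊆ collected col p := hXS.trans hpc
        obtain ⟨p1, u, q, hpeq, hcolsub, hu⟩ := exists_split col X hXne p hXsub
        have hus : u ≠ s := by
          rintro rfl
          obtain ⟨c, hc⟩ := hu
          rw [hcols] at hc
          simp at hc
        have hP1last : (p1 ++ [u]).getLast? = some u := by
          rw [List.getLast?_append_cons]; rfl
        have hP1head : (p1 ++ [u]).head? = some s := by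
          rw [← hph, hpeq]
          cases p1 with
          | nil => rfl
          | cons a t => rfl
        have hQlast : (u :: q).getLast? = some v := by
          rw [hpeq, List.getLast?_append_cons] at hpl; exact hpl
        have hsplitW : walkWeightE w p = walkWeightE w (p1 ++ [u]) + walkWeightE w (u :: q) := by
          have hg := walkWeightE_glue w (p1 ++ [u]) u q hP1last
          rw [hpeq]
          rw [← hg]
          simp
        have hT_u : T u X ≤ walkWeightE w (p1 ++ [u]) := by
          have hXu : X ∩ col u ≠ ∅ := Finset.nonempty_iff_ne_empty.1 hu
          rw [ih X hXcard u hus hXu]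
          exact sInf_le ⟨p1 ++ [u], hP1head, hP1last, hcolsub, rfl⟩
        have hw_uv : w' u v ≤ walkWeightE w (u :: q) := by
          rw [hw']
          exact sInf_le ⟨u :: q, rfl, hQlast, rfl⟩
        calc (⨅ u : V, T u X + w' u v) ≤ T u X + w' u v := iInf_le _ u
          _ ≤ walkWeightE w (p1 ++ [u]) + walkWeightE w (u :: q) := add_le_add hT_u hw_uv
          _ = walkWeightE w p := hsplitW.symm
    · -- every DP candidate dominates some walk
      apply le_iInf
      intro u
      rcases eq_or_ne u s with rfl | hus
      · by_cases hXe : X = ∅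
        · rw [hXe, hTs0, zero_add, hw']
          apply sInf_le_sInf
          rintro x ⟨p, h1, h2, h3⟩
          have hScol : S ⊆ col v := by
            rwa [hXdef, Finset.sdiff_eq_empty_iff_subset] at hXe
          exact ⟨p, h1, h2, hScol.trans (col_subset_collected col (mem_of_getLast?' h2)), h3⟩
        · rw [hTs X hXe]; simp
      · by_cases hXu : X ∩ col u = ∅
        · rw [hT1 u X hus hXu]; simp
        · rw [ih X hXcard u hus hXu, hw', ENNReal.sInf_add]
          simp only [le_iInf_iff]
          rintro a ⟨p1, h1h, h1l, h1c, rfl⟩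
          rw [add_comm, ENNReal.sInf_add]
          simp only [le_iInf_iff]
          rintro b ⟨q, h2h, h2l, rfl⟩
          rw [add_comm]
          -- q starts with u
          obtain ⟨t, rfl⟩ : ∃ t, q = u :: t := by
            cases q with
            | nil => simp at h2h
            | cons a t =>
              simp only [List.head?_cons, Option.some.injEq] at h2h
              exact ⟨t, by rw [h2h]⟩
          have hlast : (p1 ++ t).getLast? = some v := by
            cases t with
            | nil =>
              simp only [List.getLast?_singleton, Option.some.injEq] at h2l
              rw [List.append_nil, h1l, h2l]
            | cons c t' =>
              rw [List.getLast?_cons_cons] at h2l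
              rw [List.getLast?_append_cons]
              exact h2l
          apply sInf_le
          refine ⟨p1 ++ t, ?_, hlast, ?_, ?_⟩
          · rw [List.head?_append_of_ne_nil p1 (by rintro rfl; simp at h1h), h1h]
          · intro c hc
            by_cases hcv : c ∈ col v
            · exact col_subset_collected col (mem_of_getLast?' hlast) hcv
            · have hcX : c ∈ X := Finset.mem_sdiff.2 ⟨hc, hcv⟩
              rw [collected_append]
              exact Finset.mem_union_left _ (h1c hcX)
          · exact walkWeightE_glue w p1 u t h1l
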